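/- For the semigroup-embedding reduction setting, if J is a supported solution of I_{A,f} and the Boolean query Q (which is true iff the relation G of J fails to encode a total associative function extending nothing beyond functionality) is false on J, then the relation {(a,b,c) | G(a,b,c) ∈ J} is the graph of a total associative function g on a finite set B ⊇ A extending f; hence (A,f) is a yes-instance of the finite semigroup embedding problem. -/
import Mathlib



namespace DE

abbrev Var := ℕ

inductive Term (C : Type) where
  | const : C → Term C
  | null : ℕ → Term C

structure Atom (R C : Type) where
  rel : R
  args : List (Var ⊕ C)

structure Fact (R C : Type) where
  rel : R
  args : List (Term C)

abbrev Instance (R C : Type) := Set (Fact R C)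

def termOf {C : Type} (h : Var → Term C) : Var ⊕ C → Term C
  | Sum.inl v => h v
  | Sum.inr c => Term.const c

def applyAtom {R C : Type} (h : Var → Term C) (a : Atom R C) : Fact R C :=
  ⟨a.rel, a.args.map (termOf h)⟩

/-- `h` maps every atom of `as` into the instance `I`. -/
def holdsBody {R C : Type} (I : Instance R C) (h : Var → Term C)
    (as : List (Atom R C)) : Prop :=
  ∀ a ∈ as, applyAtom h a ∈ I

/-- A tuple-generating dependency. -/
structure TGD (R C : Type) where
  body : List (Atom R C)
  head : List (Atom R C)
  frontier : List Var
  exvars : List Var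

def varsOf {R C : Type} (as : List (Atom R C)) : Set Var :=
  {v | ∃ a ∈ as, (Sum.inl v : Var ⊕ C) ∈ a.args}

/-- Well-formedness of a TGD: frontier variables occur in the body, existential
variables do not, and every head variable is a frontier or existential variable. -/
def TGD.wf {R C : Type} (ρ : TGD R C) : Prop :=
  (∀ v ∈ ρ.frontier, v ∈ varsOf ρ.body) ∧
  (∀ z ∈ ρ.exvars, z ∉ varsOf ρ.body) ∧
  (∀ v ∈ varsOf ρ.head, v ∈ ρ.frontier ∨ v ∈ ρ.exvars)

/-- Satisfaction of a TGD by an instance. -/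
def satTGD {R C : Type} (I : Instance R C) (ρ : TGD R C) : Prop :=
  ∀ h : Var → Term C, holdsBody I h ρ.body →
    ∃ h' : Var → Term C, (∀ v ∈ varsOf ρ.body, h' v = h v) ∧ holdsBody I h' ρ.head

/-- An equality-generating dependency. -/
structure EGD (R C : Type) where
  body : List (Atom R C)
  lhs : Var
  rhs : Var

def satEGD {R C : Type} (I : Instance R C) (η : EGD R C) : Prop :=
  ∀ h : Var → Term C, holdsBody I h η.body → h η.lhs = h η.rhs

/-- An ex-choice: given a TGD and a tuple of constants for its frontier,
a constant for each existential variable. -/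
abbrev ExChoice (R C : Type) := TGD R C → List C → Var → C

def constHom {C : Type} (h : Var → C) : Var → Term C := fun v => Term.const (h v)

/-- `I` satisfies all ground versions of the TGD `ρ` that are coherent with `γ`. -/
def satTGDcoh {R C : Type} (I : Instance R C) (γ : ExChoice R C) (ρ : TGD R C) : Prop :=
  ∀ h : Var → C, (∀ z ∈ ρ.exvars, h z = γ ρ (ρ.frontier.map h) z) →
    holdsBody I (constHom h) ρ.body → holdsBody I (constHom h) ρ.head

/-- A data exchange setting: source-to-target TGDs, target TGDs, target EGDs. -/
structure Setting (R C : Type) where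
  sigmaST : List (TGD R C)
  sigmaT : List (TGD R C)
  sigmaE : List (EGD R C)

def Setting.wf {R C : Type} (S : Setting R C) : Prop :=
  ∀ ρ ∈ S.sigmaST ++ S.sigmaT, ρ.wf

/-- Classical solution: `I ∪ J` satisfies `Σst` and `J` satisfies `Σt`. -/
def classicalSolution {R C : Type} (S : Setting R C) (I J : Instance R C) : Prop :=
  J.Finite ∧ (∀ ρ ∈ S.sigmaST, satTGD (I ∪ J) ρ) ∧
    (∀ ρ ∈ S.sigmaT, satTGD J ρ) ∧ (∀ η ∈ S.sigmaE, satEGD J η)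

def supportedWith {R C : Type} (S : Setting R C) (γ : ExChoice R C)
    (I J : Instance R C) : Prop :=
  (∀ ρ ∈ S.sigmaST, satTGDcoh (I ∪ J) γ ρ) ∧
    (∀ ρ ∈ S.sigmaT, satTGDcoh J γ ρ) ∧ (∀ η ∈ S.sigmaE, satEGD J η)

/-- Supported solution: for some ex-choice `γ`, `I ∪ J` satisfies `Σst^γ`,
`J` satisfies `Σt^γ`, and no proper subset of `J` does. -/
def supportedSolution {R C : Type} (S : Setting R C) (I J : Instance R C) : Prop :=
  J.Finite ∧ ∃ γ : ExChoice R C, supportedWith S γ I J ∧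
    ∀ J' : Instance R C, J' ⊂ J → ¬ supportedWith S γ I J'

/-- An instance without labeled nulls (a database). -/
def nullFree {R C : Type} (I : Instance R C) : Prop :=
  ∀ f ∈ I, ∀ t ∈ f.args, ∃ c : C, t = Term.const c

end DE

inductive SRel : Type
  | F | G | Aux

namespace Semigroup

def rhoST (C : Type) : DE.TGD SRel C :=
  ⟨[⟨SRel.F, [Sum.inl 0, Sum.inl 1, Sum.inl 2]⟩],
   [⟨SRel.G, [Sum.inl 0, Sum.inl 1, Sum.inl 2]⟩], [0, 1, 2], []⟩

def rhoT (C : Type) : DE.TGD SRel C :=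
  ⟨[⟨SRel.G, [Sum.inl 0, Sum.inl 1, Sum.inl 2]⟩],
   [⟨SRel.G, [Sum.inl 3, Sum.inl 4, Sum.inl 5]⟩,
    ⟨SRel.Aux, [Sum.inl 0, Sum.inl 1, Sum.inl 2]⟩], [0, 1, 2], [3, 4, 5]⟩

def setting (C : Type) : DE.Setting SRel C := ⟨[rhoST C], [rhoT C], []⟩

/-- The source instance encoding the partial function `f`. -/
def Iaf {C : Type} (f : C → C → Option C) : DE.Instance SRel C :=
  {fa | ∃ a b c, f a b = some c ∧
        fa = ⟨SRel.F, [DE.Term.const a, DE.Term.const b, DE.Term.const c]⟩}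

end Semigroup

namespace Semigroup

/-- The elements mentioned in the `G` relation of `J`. -/
def gdom {C : Type} (J : DE.Instance SRel C) : Set (DE.Term C) :=
  {t | ∃ x y z : DE.Term C, (⟨SRel.G, [x, y, z]⟩ : DE.Fact SRel C) ∈ J ∧
    (t = x ∨ t = y ∨ t = z)}

end Semigroup

open Semigroup in
/-- if `J` is a supported solution of `I_{A,f}` on which the query
`Q` is false (i.e. `G` is functional, total on its mentioned elements, and
associative), then `(A,f)` is a yes-instance of the finite semigroup embedding
problem. -/
theorem supported_solution_query_false_gives_embedding {C : Type}
    (A : Finset C)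
    (f : C → C → Option C) (hf : ∀ a b c : C, f a b = some c → a ∈ A ∧ b ∈ A ∧ c ∈ A)
    (J : DE.Instance SRel C)
    (hJ : DE.supportedSolution (setting C) (Iaf f) J)
    (hfun : ∀ x y z z' : DE.Term C,
      (⟨SRel.G, [x, y, z]⟩ : DE.Fact SRel C) ∈ J →
      (⟨SRel.G, [x, y, z']⟩ : DE.Fact SRel C) ∈ J → z = z')
    (htot : ∀ x ∈ gdom J, ∀ y ∈ gdom J,
      ∃ z : DE.Term C, (⟨SRel.G, [x, y, z]⟩ : DE.Fact SRel C) ∈ J)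
    (hassocJ : ∀ a b c ab bc u w : DE.Term C,
      (⟨SRel.G, [a, b, ab]⟩ : DE.Fact SRel C) ∈ J →
      (⟨SRel.G, [b, c, bc]⟩ : DE.Fact SRel C) ∈ J →
      (⟨SRel.G, [ab, c, u]⟩ : DE.Fact SRel C) ∈ J →
      (⟨SRel.G, [a, bc, w]⟩ : DE.Fact SRel C) ∈ J → u = w) :
    ∃ B : Set C, B.Finite ∧ ↑A ⊆ B ∧ ∃ g : C → C → C,
      (∀ a ∈ B, ∀ b ∈ B, g a b ∈ B) ∧
      (∀ a b c : C, a ∈ B → b ∈ B → c ∈ B → g (g a b) c = g a (g b c)) ∧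
      (∀ a b c : C, f a b = some c → g a b = c) := by
  classical
  obtain ⟨hJfin, γ, ⟨hST, hT, hE⟩, hmin⟩ := hJ
  -- Step 1: the graph of f is contained in J (as G-facts)
  have hgraph : ∀ a b c : C, f a b = some c →
      (⟨SRel.G, [DE.Term.const a, DE.Term.const b, DE.Term.const c]⟩ : DE.Fact SRel C) ∈ J := by
    intro a b c hfab
    have hρ := hST (rhoST C) (by simp [setting])
    have hbody : DE.holdsBody (Iaf f ∪ J)
        (DE.constHom (fun v => if v = 0 then a else if v = 1 then b else c)) (rhoST C).body := by
      intro at' ha'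
      simp only [rhoST, List.mem_singleton] at ha'
      subst ha'
      left
      exact ⟨a, b, c, hfab, by simp [DE.applyAtom, DE.termOf, DE.constHom]⟩
    have hcoh : ∀ z ∈ (rhoST C).exvars,
        (fun v => if v = 0 then a else if v = 1 then b else c) z =
          γ (rhoST C) ((rhoST C).frontier.map
            (fun v => if v = 0 then a else if v = 1 then b else c)) z := by
      intro z hz; simp [rhoST] at hz
    have hhead := hρ _ hcoh hbody ⟨SRel.G, [Sum.inl 0, Sum.inl 1, Sum.inl 2]⟩ (by simp [rhoST])
    simp only [DE.applyAtom, DE.termOf, DE.constHom, List.map] at hhead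
    norm_num at hhead
    rcases hhead with h1 | h2
    · exfalso
      obtain ⟨a', b', c', _, heq⟩ := h1
      simp [Iaf] at heq
    · exact h2
  -- images of atoms under constant homomorphisms are null-free
  have himg : ∀ (h : DE.Var → C) (a : DE.Atom SRel C) (t : DE.Term C),
      t ∈ (DE.applyAtom (DE.constHom h) a).args → ∃ c : C, t = DE.Term.const c := by
    intro h a t ht
    simp only [DE.applyAtom, List.mem_map] at ht
    obtain ⟨x, _, hx⟩ := ht
    cases x with
    | inl v => exact ⟨h v, hx.symm⟩
    | inr c => exact ⟨c, hx.symm⟩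
  -- Step 2: J is null-free, by minimality
  have hallconst : ∀ fa ∈ J, ∀ t ∈ fa.args, ∃ c : C, t = DE.Term.const c := by
    by_contra hnc
    push_neg at hnc
    obtain ⟨fa, hfa, t, ht, hnt⟩ := hnc
    set J' : DE.Instance SRel C :=
      {fb ∈ J | ∀ t ∈ fb.args, ∃ c : C, t = DE.Term.const c} with hJ'def
    have hsub : J' ⊂ J := by
      rw [Set.ssubset_def]
      refine ⟨fun x hx => hx.1, fun hsup => ?_⟩
      obtain ⟨c, hc⟩ := (hsup hfa).2 t ht
      exact hnt c hc
    refine hmin J' hsub ⟨?_, ?_, ?_⟩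
    · intro ρ hρ h hcoh hbody
      have hbody' : DE.holdsBody (Iaf f ∪ J) (DE.constHom h) ρ.body := fun a ha =>
        Set.union_subset_union_right _ (fun x hx => hx.1) (hbody a ha)
      have hhead := hST ρ hρ h hcoh hbody'
      intro a ha
      rcases hhead a ha with h1 | h2
      · exact Or.inl h1
      · exact Or.inr ⟨h2, himg h a⟩
    · intro ρ hρ h hcoh hbody
      have hbody' : DE.holdsBody J (DE.constHom h) ρ.body := fun a ha => (hbody a ha).1
      have hhead := hT ρ hρ h hcoh hbody'
      intro a ha
      exact ⟨hhead a ha, himg h a⟩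
    · intro η hη; simp [setting] at hη
  -- elements mentioned in G
  set D : Set C := {c | DE.Term.const c ∈ gdom J} with hDdef
  by_cases hDne : ∃ d0 : C, d0 ∈ D
  · obtain ⟨d0, hd0⟩ := hDne
    -- existence of constant products on D
    have exz : ∀ a ∈ D, ∀ b ∈ D, ∃ z : C,
        (⟨SRel.G, [DE.Term.const a, DE.Term.const b, DE.Term.const z]⟩ : DE.Fact SRel C) ∈ J := by
      intro a ha b hb
      obtain ⟨z, hz⟩ := htot _ ha _ hb
      obtain ⟨c, hc⟩ := hallconst _ hz z (by simp)
      exact ⟨c, hc ▸ hz⟩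
    set mu : C → C → C := fun a b =>
      if h : ∃ z : C,
          (⟨SRel.G, [DE.Term.const a, DE.Term.const b, DE.Term.const z]⟩ : DE.Fact SRel C) ∈ J
      then h.choose else d0 with hmu
    have mu_spec : ∀ a ∈ D, ∀ b ∈ D,
        (⟨SRel.G, [DE.Term.const a, DE.Term.const b, DE.Term.const (mu a b)]⟩ :
          DE.Fact SRel C) ∈ J := by
      intro a ha b hb
      have hex := exz a ha b hb
      simp only [hmu, dif_pos hex]
      exact hex.choose_spec
    have mu_eq : ∀ a b c : C,
        (⟨SRel.G, [DE.Term.const a, DE.Term.const b, DE.Term.const c]⟩ : DE.Fact SRel C) ∈ J →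
        mu a b = c := by
      intro a b c hc
      have hex : ∃ z : C,
          (⟨SRel.G, [DE.Term.const a, DE.Term.const b, DE.Term.const z]⟩ : DE.Fact SRel C) ∈ J :=
        ⟨c, hc⟩
      have h1 : (⟨SRel.G, [DE.Term.const a, DE.Term.const b, DE.Term.const (mu a b)]⟩ :
          DE.Fact SRel C) ∈ J := by
        simp only [hmu, dif_pos hex]; exact hex.choose_spec
      have := hfun _ _ _ _ h1 hc
      injection this
    have muD : ∀ a ∈ D, ∀ b ∈ D, mu a b ∈ D := by
      intro a ha b hb
      exact ⟨_, _, _, mu_spec a ha b hb, Or.inr (Or.inr rfl)⟩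
    -- associativity on D
    have hassoc' : ∀ a ∈ D, ∀ b ∈ D, ∀ c ∈ D, mu (mu a b) c = mu a (mu b c) := by
      intro a ha b hb c hc
      have h1 := mu_spec a ha b hb
      have h2 := mu_spec b hb c hc
      have h3 := mu_spec (mu a b) (muD a ha b hb) c hc
      have h4 := mu_spec a ha (mu b c) (muD b hb c hc)
      have := hassocJ _ _ _ _ _ _ _ h1 h2 h3 h4
      injection this
    -- the retraction φ
    set φ : C → C := fun c => if c ∈ D then c else d0 with hφ
    have φD : ∀ c : C, φ c ∈ D := by
      intro c; simp only [hφ]; split <;> assumption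
    have φid : ∀ c ∈ D, φ c = c := by
      intro c hc; simp only [hφ, if_pos hc]
    -- finiteness
    have hgfin : (gdom J).Finite := by
      apply Set.Finite.subset (hJfin.biUnion (fun fa _ => fa.args.finite_toSet))
      rintro t ⟨x, y, z, hfJ, ht⟩
      refine Set.mem_biUnion hfJ ?_
      rcases ht with rfl | rfl | rfl <;> simp
    have hDfin : D.Finite := by
      have : D = DE.Term.const ⁻¹' (gdom J) := rfl
      rw [this]
      exact Set.Finite.preimage (fun a _ b _ h => by injection h) hgfin
    refine ⟨↑A ∪ D, (A.finite_toSet.union hDfin), Set.subset_union_left,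
      fun a b => mu (φ a) (φ b), ?_, ?_, ?_⟩
    · intro a _ b _
      exact Or.inr (muD _ (φD a) _ (φD b))
    · intro a b c _ _ _
      show mu (φ (mu (φ a) (φ b))) (φ c) = mu (φ a) (φ (mu (φ b) (φ c)))
      have e1 : φ (mu (φ a) (φ b)) = mu (φ a) (φ b) := φid _ (muD _ (φD a) _ (φD b))
      have e2 : φ (mu (φ b) (φ c)) = mu (φ b) (φ c) := φid _ (muD _ (φD b) _ (φD c))
      rw [e1, e2]
      exact hassoc' _ (φD a) _ (φD b) _ (φD c)
    · intro a b c hfab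
      have hfact := hgraph a b c hfab
      have haD : a ∈ D := ⟨_, _, _, hfact, Or.inl rfl⟩
      have hbD : b ∈ D := ⟨_, _, _, hfact, Or.inr (Or.inl rfl)⟩
      show mu (φ a) (φ b) = c
      rw [φid a haD, φid b hbD]
      exact mu_eq a b c hfact
  · -- D empty: f is nowhere defined, take a left-zero semigroup on A
    refine ⟨↑A, A.finite_toSet, subset_rfl, fun a _ => a,
      fun a ha _ _ => ha, fun _ _ _ _ _ _ => rfl, ?_⟩
    intro a b c hfab
    exact absurd ⟨a, _, _, _, hgraph a b c hfab, Or.inl rfl⟩ hDne
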